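/- For a Bernoulli random variable B_θ with success probability p(θ) ∈ (0,1), where p is differentiable, and any function f : {0,1} → ℝ, the smoothed perturbation analysis identity holds: d/dθ E[f(B_θ)] = E[w(B_θ) · (f(1 − B_θ) − f(B_θ))], where w(1) = max(0, −p'(θ))/p(θ) and w(0) = max(0, p'(θ))/(1 − p(θ)). -/
import Mathlib


/-- SPA identity for a Bernoulli random variable `B_θ` with success probability `p θ`:
`d/dθ E[f(B_θ)] = E[w(B_θ)·(f(1−B_θ) − f(B_θ))]`, with
`w(1) = max(0, −p')/p` and `w(0) = max(0, p')/(1−p)`. -/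
theorem stmt2 (p : ℝ → ℝ) (θ : ℝ) (hp : DifferentiableAt ℝ p θ)
    (h0 : 0 < p θ) (h1 : p θ < 1) (f : Bool → ℝ) :
    deriv (fun t => p t * f true + (1 - p t) * f false) θ
      = p θ * (max 0 (-(deriv p θ)) / p θ * (f false - f true))
        + (1 - p θ) * (max 0 (deriv p θ) / (1 - p θ) * (f true - f false)) := by
  have hL : deriv (fun t => p t * f true + (1 - p t) * f false) θ
      = deriv p θ * f true - deriv p θ * f false := by
    have : HasDerivAt (fun t => p t * f true + (1 - p t) * f false)
        (deriv p θ * f true + (0 - deriv p θ) * f false) θ := by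
      exact (((hp.hasDerivAt).mul_const _).add
        (((hasDerivAt_const θ (1:ℝ)).sub hp.hasDerivAt).mul_const _))
    rw [this.deriv]; ring
  have hmax : max 0 (deriv p θ) - max 0 (-(deriv p θ)) = deriv p θ := by
    rcases le_total 0 (deriv p θ) with h | h
    · rw [max_eq_right h, max_eq_left (by linarith)]; ring
    · rw [max_eq_left h, max_eq_right (by linarith)]; ring
  have e1 : p θ * (max 0 (-(deriv p θ)) / p θ * (f false - f true))
      = max 0 (-(deriv p θ)) * (f false - f true) := by
    field_simp
  have e2 : (1 - p θ) * (max 0 (deriv p θ) / (1 - p θ) * (f true - f false))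
      = max 0 (deriv p θ) * (f true - f false) := by
    have : (1 : ℝ) - p θ ≠ 0 := by linarith
    field_simp
  rw [hL, e1, e2]
  linear_combination hmax * (f false - f true)
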